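/- arXiv:1908.08347 — 4 statements merged into one kernel-verified Lean document; each statement's English description precedes it below -/
import Mathlib

section
/- Let F be the family of subsets of {1,…,n} of size exactly k/2 (k even), and for each set S of size at most k/2 let f̂_S = Σ_{A ∈ F, S ⊆ A} f_A, where (f_A) is any family of elements of a commutative ring indexed by F. Then Σ_{A ∈ F} Σ_{B ∈ F, A ∩ B = ∅} f_A · f_B = Σ_{S : |S| ≤ k/2} (-1)^{|S|} (f̂_S)². -/
open Finset

/-- Inclusion–exclusion identity for the disjoint-sum trick: with `F` the family of
`k/2`-subsets of `[n]` and `f̂_S = Σ_{A ∈ F, S ⊆ A} f_A`,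
`Σ_{A,B ∈ F, A ∩ B = ∅} f_A f_B = Σ_{|S| ≤ k/2} (-1)^{|S|} (f̂_S)²`. -/
theorem disjoint_sum_inclusion_exclusion (n k : ℕ) (hk : Even k) (hkn : k / 2 ≤ n)
    (R : Type*) [CommRing R] (f : Finset (Fin n) → R) :
    ∑ A ∈ (univ : Finset (Fin n)).powersetCard (k / 2),
      ∑ B ∈ ((univ : Finset (Fin n)).powersetCard (k / 2)).filter (fun B => A ∩ B = ∅),
        f A * f B =
    ∑ S ∈ (univ : Finset (Fin n)).powerset.filter (fun S => S.card ≤ k / 2),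
      (-1 : R) ^ S.card *
        (∑ A ∈ ((univ : Finset (Fin n)).powersetCard (k / 2)).filter (fun A => S ⊆ A), f A) ^ 2 := by
  classical
  set m := k / 2 with hm
  set P := (univ : Finset (Fin n)).powersetCard m with hP
  -- extend RHS sum to full powerset
  have hext : ∑ S ∈ (univ : Finset (Fin n)).powerset.filter (fun S => S.card ≤ m),
      (-1 : R) ^ S.card * (∑ A ∈ P.filter (fun A => S ⊆ A), f A) ^ 2
    = ∑ S ∈ (univ : Finset (Fin n)).powerset,
      (-1 : R) ^ S.card * (∑ A ∈ P.filter (fun A => S ⊆ A), f A) ^ 2 := by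
    refine Finset.sum_subset (Finset.filter_subset _ _) ?_
    intro S hS hS'
    have hcard : ¬ S.card ≤ m := fun h => hS' (Finset.mem_filter.mpr ⟨hS, h⟩)
    have hemp : P.filter (fun A => S ⊆ A) = ∅ := by
      rw [Finset.filter_eq_empty_iff]
      intro A hA hSA
      rw [hP, Finset.mem_powersetCard] at hA
      exact hcard (hA.2 ▸ Finset.card_le_card hSA)
    rw [hemp]
    simp
  rw [hext]
  -- expand
  have key : ∀ S : Finset (Fin n),
      (-1 : R) ^ S.card * (∑ A ∈ P.filter (fun A => S ⊆ A), f A) ^ 2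
      = ∑ A ∈ P, ∑ B ∈ P,
          (if S ⊆ A ∧ S ⊆ B then (-1 : R) ^ S.card * (f A * f B) else 0) := by
    intro S
    rw [sq, Finset.sum_filter, Finset.sum_mul_sum, Finset.mul_sum]
    refine Finset.sum_congr rfl fun A _ => ?_
    rw [Finset.mul_sum]
    refine Finset.sum_congr rfl fun B _ => ?_
    by_cases h1 : S ⊆ A <;> by_cases h2 : S ⊆ B <;> simp [h1, h2]
  simp only [key]
  rw [Finset.sum_comm]
  refine Finset.sum_congr rfl fun A hA => ?_
  rw [Finset.sum_comm, Finset.sum_filter]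
  refine Finset.sum_congr rfl fun B hB => ?_
  have : ∀ S : Finset (Fin n),
      (if S ⊆ A ∧ S ⊆ B then (-1 : R) ^ S.card * (f A * f B) else 0)
      = (if S ∈ (A ∩ B).powerset then (-1 : R) ^ S.card else 0) * (f A * f B) := by
    intro S
    by_cases h : S ⊆ A ∧ S ⊆ B
    · rw [if_pos h, if_pos (Finset.mem_powerset.mpr (Finset.subset_inter h.1 h.2))]
    · rw [if_neg h, if_neg (fun hc => h (Finset.subset_inter_iff.mp (Finset.mem_powerset.mp hc))),
        zero_mul]
  simp only [this, ← Finset.sum_mul, ← Finset.sum_filter]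
  have hfilt : (univ : Finset (Fin n)).powerset.filter (fun S => S ∈ (A ∩ B).powerset)
      = (A ∩ B).powerset := by
    ext S; simp
  rw [hfilt]
  have hz : (∑ S ∈ (A ∩ B).powerset, (-1 : R) ^ S.card)
      = if A ∩ B = ∅ then 1 else 0 := by
    exact_mod_cast congrArg (Int.cast : ℤ → R)
      (Finset.sum_powerset_neg_one_pow_card (x := A ∩ B))
  rw [hz]
  split <;> simp
end

section
/- Let S ⊆ I_{2k,2n} be the set of injections f : [2k] → [2n] for which there exists an injection g : [k] → [n] with f(2i-1) = g(i) and f(2i) = n + g(i) for all i ∈ [k]. Then the map g ↦ f_g is a bijection from I_{k,n} to S, and every f ∈ S has sign sgn(f) = (-1)^{k(k-1)/2}. -/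
open Finset

/-- `fgRel g f` says `f` is the interleaved injection `f_g : [2k] → [2n]` with
`f(2i-1) = g(i)` and `f(2i) = n + g(i)` (1-based; here 0-based indexing). -/
def fgRel (k n : ℕ) (g : Fin k ↪ Fin n) (f : Fin (2 * k) → Fin (2 * n)) : Prop :=
  ∀ i : Fin k,
    f ⟨2 * (i : ℕ), by have := i.isLt; omega⟩ =
      ⟨(g i : ℕ), by have := (g i).isLt; omega⟩ ∧
    f ⟨2 * (i : ℕ) + 1, by have := i.isLt; omega⟩ =
      ⟨n + (g i : ℕ), by have := (g i).isLt; omega⟩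

/-- The interleaving equivalence `Fin k × Fin 2 ≃ Fin (2 * k)`, `(i, b) ↦ 2i + b`. -/
def pairEquiv (k : ℕ) : Fin k × Fin 2 ≃ Fin (2 * k) where
  toFun p := ⟨2 * (p.1 : ℕ) + (p.2 : ℕ), by have := p.1.isLt; have := p.2.isLt; omega⟩
  invFun j := (⟨(j : ℕ) / 2, by have := j.isLt; omega⟩, ⟨(j : ℕ) % 2, by omega⟩)
  left_inv p := by
    obtain ⟨⟨i, hi⟩, ⟨b, hb⟩⟩ := p
    simp only [Prod.mk.injEq, Fin.mk.injEq]
    constructor <;> omega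
  right_inv j := by
    ext
    simp only []
    omega

/-- The interleaved function built from `g`. -/
def fgFun (k n : ℕ) (g : Fin k ↪ Fin n) (j : Fin (2 * k)) : Fin (2 * n) :=
  if (j : ℕ) % 2 = 0 then
    ⟨(g ⟨(j : ℕ) / 2, by have := j.isLt; omega⟩ : ℕ),
      by have := (g ⟨(j : ℕ) / 2, by have := j.isLt; omega⟩).isLt; omega⟩
  else
    ⟨n + (g ⟨(j : ℕ) / 2, by have := j.isLt; omega⟩ : ℕ),
      by have := (g ⟨(j : ℕ) / 2, by have := j.isLt; omega⟩).isLt; omega⟩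

lemma fgFun_injective (k n : ℕ) (g : Fin k ↪ Fin n) : Function.Injective (fgFun k n g) := by
  intro a b hab
  unfold fgFun at hab
  by_cases ha : (a : ℕ) % 2 = 0 <;> by_cases hb : (b : ℕ) % 2 = 0 <;>
    simp only [ha, hb, if_true, if_false, Fin.mk.injEq, reduceIte] at hab
  · have := g.injective (Fin.ext hab)
    rw [Fin.mk.injEq] at this
    exact Fin.ext (by omega)
  · have h1 := (g ⟨(a : ℕ) / 2, by have := a.isLt; omega⟩).isLt
    omega
  · have h1 := (g ⟨(b : ℕ) / 2, by have := b.isLt; omega⟩).isLt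
    omega
  · have hab' : (g ⟨(a : ℕ) / 2, by have := a.isLt; omega⟩ : ℕ)
        = (g ⟨(b : ℕ) / 2, by have := b.isLt; omega⟩ : ℕ) := by omega
    have := g.injective (Fin.ext hab')
    rw [Fin.mk.injEq] at this
    exact Fin.ext (by omega)

/-- The interleaved embedding built from `g`. -/
def fgEmb (k n : ℕ) (g : Fin k ↪ Fin n) : Fin (2 * k) ↪ Fin (2 * n) :=
  ⟨fgFun k n g, fgFun_injective k n g⟩

lemma fgRel_fgEmb (k n : ℕ) (g : Fin k ↪ Fin n) : fgRel k n g ⇑(fgEmb k n g) := by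
  intro i
  constructor
  · show fgFun k n g _ = _
    unfold fgFun
    have hidx : ∀ h, (⟨2 * (i : ℕ) / 2, h⟩ : Fin k) = i := fun _ => Fin.ext (by simp only [Fin.val_mk]; omega)
    have h0 : (2 * (i : ℕ)) % 2 = 0 := by omega
    simp only [h0, if_true, Fin.mk.injEq, reduceIte, hidx]
  · show fgFun k n g _ = _
    unfold fgFun
    have hidx : ∀ h, (⟨(2 * (i : ℕ) + 1) / 2, h⟩ : Fin k) = i := fun _ => Fin.ext (by simp only [Fin.val_mk]; omega)
    have h0 : (2 * (i : ℕ) + 1) % 2 = 1 := by omega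
    simp only [h0, Fin.mk.injEq, hidx]
    norm_num

set_option maxHeartbeats 2000000 in
/-- The map `g ↦ f_g` is a bijection from `I_{k,n}` onto the set `S` of injections
of the interleaved form, and every `f ∈ S` has `sgn(f) = (-1)^{k(k-1)/2}`. -/
theorem interleaved_injection_bijection_sign (k n : ℕ) :
    (∀ g : Fin k ↪ Fin n, ∃! f : Fin (2 * k) ↪ Fin (2 * n), fgRel k n g ⇑f) ∧
    (∀ (f : Fin (2 * k) ↪ Fin (2 * n)) (g g' : Fin k ↪ Fin n),
      fgRel k n g ⇑f → fgRel k n g' ⇑f → g = g') ∧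
    (∀ (g : Fin k ↪ Fin n) (f : Fin (2 * k) ↪ Fin (2 * n)), fgRel k n g ⇑f →
      (-1 : ℤ) ^ ((univ.filter fun p : Fin (2 * k) × Fin (2 * k) =>
          p.1 < p.2 ∧ f p.2 < f p.1).card) = (-1 : ℤ) ^ (k * (k - 1) / 2)) := by
  refine ⟨?_, ?_, ?_⟩
  · -- existence and uniqueness of f_g
    intro g
    refine ⟨fgEmb k n g, fgRel_fgEmb k n g, ?_⟩
    intro f' hf'
    apply Function.Embedding.ext
    intro j
    have hrel := fgRel_fgEmb k n g
    rcases Nat.even_or_odd (j : ℕ) with he | ho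
    · obtain ⟨r, hr⟩ := he
      have hj : j = ⟨2 * ((j : ℕ) / 2), by have := j.isLt; omega⟩ := by
        apply Fin.ext; simp; omega
      rw [hj]
      rw [(hf' ⟨(j : ℕ) / 2, by have := j.isLt; omega⟩).1,
        (hrel ⟨(j : ℕ) / 2, by have := j.isLt; omega⟩).1]
    · obtain ⟨r, hr⟩ := ho
      have hj : j = ⟨2 * ((j : ℕ) / 2) + 1, by have := j.isLt; omega⟩ := by
        apply Fin.ext; simp; omega
      rw [hj]
      rw [(hf' ⟨(j : ℕ) / 2, by have := j.isLt; omega⟩).2,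
        (hrel ⟨(j : ℕ) / 2, by have := j.isLt; omega⟩).2]
  · -- injectivity of g ↦ f_g
    intro f g g' h h'
    apply Function.Embedding.ext
    intro i
    have h1 := (h i).1
    have h2 := (h' i).1
    rw [h1] at h2
    rw [Fin.mk.injEq] at h2
    exact Fin.ext h2
  · -- sign computation
    intro g f hf
    -- values of f at the interleaved points
    have hF0 : ∀ i : Fin k, f ((pairEquiv k) (i, 0)) =
        ⟨(g i : ℕ), by have := (g i).isLt; omega⟩ := by
      intro i
      have : (pairEquiv k) (i, 0) = ⟨2 * (i : ℕ), by have := i.isLt; omega⟩ := by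
        apply Fin.ext; simp [pairEquiv]
      rw [this]
      exact (hf i).1
    have hF1 : ∀ i : Fin k, f ((pairEquiv k) (i, 1)) =
        ⟨n + (g i : ℕ), by have := (g i).isLt; omega⟩ := by
      intro i
      have : (pairEquiv k) (i, 1) = ⟨2 * (i : ℕ) + 1, by have := i.isLt; omega⟩ := by
        apply Fin.ext; simp [pairEquiv]
      rw [this]
      exact (hf i).2
    set L := (univ.filter fun p : Fin k × Fin k => p.1 < p.2).card with hLdef
    set C := (univ.filter fun p : Fin k × Fin k => p.1 < p.2 ∧ g p.2 < g p.1).card with hCdef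
    -- key counting identity
    have key : (univ.filter fun p : Fin (2 * k) × Fin (2 * k) =>
        p.1 < p.2 ∧ f p.2 < f p.1).card = L + 2 * C := by
      rw [Finset.card_filter]
      rw [← Equiv.sum_comp (Equiv.prodCongr (pairEquiv k) (pairEquiv k))
        (fun p : Fin (2 * k) × Fin (2 * k) => if p.1 < p.2 ∧ f p.2 < f p.1 then 1 else 0)]
      rw [← Equiv.sum_comp (Equiv.prodProdProdComm (Fin k) (Fin k) (Fin 2) (Fin 2))]
      rw [Fintype.sum_prod_type]
      have step : ∀ p : Fin k × Fin k,
          (∑ b : Fin 2 × Fin 2,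
            if (pairEquiv k) (p.1, b.1) < (pairEquiv k) (p.2, b.2) ∧
              f ((pairEquiv k) (p.2, b.2)) < f ((pairEquiv k) (p.1, b.1)) then 1 else 0) =
          ((if p.1 < p.2 then 1 else 0) + 2 * if p.1 < p.2 ∧ g p.2 < g p.1 then 1 else 0) := by
        rintro ⟨i1, i2⟩
        rw [Fintype.sum_prod_type]
        rw [Fin.sum_univ_two, Fin.sum_univ_two, Fin.sum_univ_two]
        simp only [hF0, hF1]
        have hlt : ∀ (b1 b2 : Fin 2) (j1 j2 : Fin k),
            ((pairEquiv k) (j1, b1) < (pairEquiv k) (j2, b2)) ↔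
              (2 * (j1 : ℕ) + (b1 : ℕ) < 2 * (j2 : ℕ) + (b2 : ℕ)) := by
          intro b1 b2 j1 j2
          simp [pairEquiv, Fin.lt_def]
        simp only [hlt, Fin.lt_def, Fin.mk_lt_mk]
        have e1 := (g i1).isLt
        have e2 := (g i2).isLt
        split_ifs <;> omega
      calc (∑ p : Fin k × Fin k, ∑ b : Fin 2 × Fin 2,
            if (pairEquiv k) (p.1, b.1) < (pairEquiv k) (p.2, b.2) ∧
              f ((pairEquiv k) (p.2, b.2)) < f ((pairEquiv k) (p.1, b.1)) then 1 else 0)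
          = ∑ p : Fin k × Fin k,
              ((if p.1 < p.2 then 1 else 0) + 2 * if p.1 < p.2 ∧ g p.2 < g p.1 then 1 else 0) :=
            Finset.sum_congr rfl (fun p _ => step p)
        _ = L + 2 * C := by
            rw [Finset.sum_add_distrib, ← Finset.mul_sum, hLdef, hCdef,
              Finset.card_filter, Finset.card_filter]
    -- compute L
    have hL2 : L * 2 = k * (k - 1) := by
      have hL : L = ∑ j : Fin k, (j : ℕ) := by
        rw [hLdef, Finset.card_filter, Fintype.sum_prod_type]
        rw [Finset.sum_comm]
        apply Finset.sum_congr rfl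
        intro j _
        have hfil : (univ.filter fun i : Fin k => i < j) = Finset.Iio j := by
          ext x; simp
        rw [← Finset.card_filter, hfil, Fin.card_Iio]
      rw [hL, Fin.sum_univ_eq_sum_range (fun i => i) k]
      exact Finset.sum_range_id_mul_two k
    have hLeq : L = k * (k - 1) / 2 := by omega
    rw [key, pow_add, hLeq, pow_mul]
    norm_num
end

section
/- For injections g : [k] → [n] and the associated injection f_g : [2k] → [2n] defined by f_g(2i-1) = g(i), f_g(2i) = n + g(i), the number of inversions of f_g is even-plus-constant: inv(f_g) ≡ k(k-1)/2 (mod 2). Equivalently, (-1)^{inv(f_g)} = (-1)^{k(k-1)/2} independently of g. -/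
open Finset

/-- The equivalence `Fin k × Fin 2 ≃ Fin (2 * k)`, `(i, s) ↦ 2 * i + s`. -/
def interEquiv (k : ℕ) : Fin k × Fin 2 ≃ Fin (2 * k) where
  toFun p := ⟨2 * p.1 + p.2, by have := p.1.isLt; have := p.2.isLt; omega⟩
  invFun a := (⟨a / 2, by have := a.isLt; omega⟩, ⟨a % 2, by have := a.isLt; omega⟩)
  left_inv p := by
    have h1 := p.1.isLt; have h2 := p.2.isLt
    have : (2 * (p.1 : ℕ) + p.2) / 2 = p.1 := by omega
    have : (2 * (p.1 : ℕ) + p.2) % 2 = p.2 := by omega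
    ext <;> simp_all
  right_inv a := by
    have := a.isLt
    ext
    simp
    omega

/-- For a fixed pair `i j` of indices of `g`, the four corresponding pairs of
indices of `f` contribute an odd number of inversions if `i < j`, and an even
number otherwise. -/
lemma interleaved_inner_sum (k n : ℕ) (g : Fin k ↪ Fin n)
    (f : Fin (2 * k) → Fin (2 * n)) (hf : fgRel k n g f) (i j : Fin k) :
    (∑ s : Fin 2, ∑ t : Fin 2,
      (if interEquiv k (i, s) < interEquiv k (j, t) ∧
          f (interEquiv k (j, t)) < f (interEquiv k (i, s)) then (1 : ZMod 2) else 0)) =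
      if i < j then 1 else 0 := by
  have hi0 : interEquiv k (i, 0) = ⟨2 * (i : ℕ), by have := i.isLt; omega⟩ := by
    ext; simp [interEquiv]
  have hi1 : interEquiv k (i, 1) = ⟨2 * (i : ℕ) + 1, by have := i.isLt; omega⟩ := by
    ext; simp [interEquiv]
  have hj0 : interEquiv k (j, 0) = ⟨2 * (j : ℕ), by have := j.isLt; omega⟩ := by
    ext; simp [interEquiv]
  have hj1 : interEquiv k (j, 1) = ⟨2 * (j : ℕ) + 1, by have := j.isLt; omega⟩ := by
    ext; simp [interEquiv]
  have hgi := (hf i).1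
  have hgi' := (hf i).2
  have hgj := (hf j).1
  have hgj' := (hf j).2
  have hbi := (g i).isLt
  have hbj := (g j).isLt
  simp only [Fin.sum_univ_two, hi0, hi1, hj0, hj1, hgi, hgi', hgj, hgj',
    Fin.lt_def, Fin.mk_lt_mk]
  split_ifs <;> first | rfl | omega

/-- For every injection `g : [k] → [n]`, the interleaved injection `f_g` satisfies
`(-1)^{inv(f_g)} = (-1)^{k(k-1)/2}`, i.e. `inv(f_g) ≡ k(k-1)/2 (mod 2)`,
independently of `g`. -/
theorem interleaved_injection_inversion_parity (k n : ℕ) (g : Fin k ↪ Fin n)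
    (f : Fin (2 * k) → Fin (2 * n)) (hf : fgRel k n g f) :
    (-1 : ℤ) ^ ((univ.filter fun p : Fin (2 * k) × Fin (2 * k) =>
        p.1 < p.2 ∧ f p.2 < f p.1).card) = (-1 : ℤ) ^ (k * (k - 1) / 2) ∧
    ((univ.filter fun p : Fin (2 * k) × Fin (2 * k) =>
        p.1 < p.2 ∧ f p.2 < f p.1).card) % 2 = (k * (k - 1) / 2) % 2 := by
  set N := (univ.filter fun p : Fin (2 * k) × Fin (2 * k) =>
      p.1 < p.2 ∧ f p.2 < f p.1).card with hN
  have key : (N : ZMod 2) = ((k * (k - 1) / 2 : ℕ) : ZMod 2) := by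
    have h1 : (N : ZMod 2) = ∑ p : Fin (2 * k) × Fin (2 * k),
        (if p.1 < p.2 ∧ f p.2 < f p.1 then (1 : ZMod 2) else 0) := by
      rw [hN, Finset.card_filter, Nat.cast_sum]
      refine Finset.sum_congr rfl fun p _ => ?_
      split_ifs <;> simp
    have h2 : ∑ p : Fin (2 * k) × Fin (2 * k),
        (if p.1 < p.2 ∧ f p.2 < f p.1 then (1 : ZMod 2) else 0) =
        ∑ q : (Fin k × Fin 2) × (Fin k × Fin 2),
          (if interEquiv k q.1 < interEquiv k q.2 ∧
              f (interEquiv k q.2) < f (interEquiv k q.1) then (1 : ZMod 2) else 0) :=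
      (Fintype.sum_equiv ((interEquiv k).prodCongr (interEquiv k))
        (fun q : (Fin k × Fin 2) × (Fin k × Fin 2) =>
          if interEquiv k q.1 < interEquiv k q.2 ∧
              f (interEquiv k q.2) < f (interEquiv k q.1) then (1 : ZMod 2) else 0)
        (fun p : Fin (2 * k) × Fin (2 * k) =>
          if p.1 < p.2 ∧ f p.2 < f p.1 then (1 : ZMod 2) else 0)
        (fun q => rfl)).symm
    have h3 : ∑ q : (Fin k × Fin 2) × (Fin k × Fin 2),
          (if interEquiv k q.1 < interEquiv k q.2 ∧
              f (interEquiv k q.2) < f (interEquiv k q.1) then (1 : ZMod 2) else 0) =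
        ∑ i : Fin k, ∑ s : Fin 2, ∑ j : Fin k, ∑ t : Fin 2,
          (if interEquiv k (i, s) < interEquiv k (j, t) ∧
              f (interEquiv k (j, t)) < f (interEquiv k (i, s)) then (1 : ZMod 2) else 0) := by
      simp only [Fintype.sum_prod_type]
    have h4 : ∑ i : Fin k, ∑ s : Fin 2, ∑ j : Fin k, ∑ t : Fin 2,
          (if interEquiv k (i, s) < interEquiv k (j, t) ∧
              f (interEquiv k (j, t)) < f (interEquiv k (i, s)) then (1 : ZMod 2) else 0) =
        ∑ i : Fin k, ∑ j : Fin k, (if i < j then (1 : ZMod 2) else 0) := by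
      refine Finset.sum_congr rfl fun i _ => ?_
      rw [Finset.sum_comm]
      refine Finset.sum_congr rfl fun j _ => ?_
      exact interleaved_inner_sum k n g f hf i j
    have hnat : (∑ i : Fin k, ∑ j : Fin k, (if i < j then (1 : ℕ) else 0)) =
        k * (k - 1) / 2 := by
      have hcol : ∀ j : Fin k, (∑ i : Fin k, (if i < j then (1 : ℕ) else 0)) = (j : ℕ) := by
        intro j
        rw [(Finset.card_filter (fun i : Fin k => i < j) univ).symm]
        have : (univ.filter fun i : Fin k => i < j) = Finset.Iio j := by
          ext x; simp
        rw [this, Fin.card_Iio]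
      rw [Finset.sum_comm]
      simp only [hcol]
      rw [Fin.sum_univ_eq_sum_range (fun x => x) k, Finset.sum_range_id]
    have h5 : ∑ i : Fin k, ∑ j : Fin k, (if i < j then (1 : ZMod 2) else 0) =
        ((k * (k - 1) / 2 : ℕ) : ZMod 2) := by
      rw [← hnat, Nat.cast_sum]
      refine Finset.sum_congr rfl fun i _ => ?_
      rw [Nat.cast_sum]
      refine Finset.sum_congr rfl fun j _ => ?_
      split_ifs <;> simp
    rw [h1, h2, h3, h4, h5]
  have hmod : N % 2 = (k * (k - 1) / 2) % 2 :=
    (ZMod.natCast_eq_natCast_iff' _ _ _).1 key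
  constructor
  · rw [neg_one_pow_eq_pow_mod_two, hmod, ← neg_one_pow_eq_pow_mod_two]
  · exact hmod
end

section
/- For k even, in the free noncommutative algebra, S*_{n,k} = Σ_{S : |S| ≤ k/2} (-1)^{|S|} f̂_S · f̂_S, where f̂_S = Σ_{A ⊇ S, |A| = k/2} m*_A and m*_A = Σ_{σ ∈ S_{k/2}} y_{a_{σ(1)}} ⋯ y_{a_{σ(k/2)}} is the symmetrization of the multilinear word on A = {a_1,…,a_{k/2}}. -/
open Finset

/-- `m*_A`: the symmetrized multilinear word on the `m`-set `A`, i.e. the sum of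
all words whose letters are exactly the elements of `A`, each appearing once. -/
noncomputable def mstar (F : Type*) [Field F] (n m : ℕ) (A : Finset (Fin n)) :
    MonoidAlgebra F (FreeMonoid (Fin n)) :=
  ∑ e ∈ (univ : Finset (Fin m ↪ Fin n)).filter (fun e => univ.image (fun i : Fin m => e i) = A),
    MonoidAlgebra.single (FreeMonoid.ofList (List.ofFn fun i : Fin m => e i)) (1 : F)

/-- `S*_{n,k}`: the sum of all injective words of length `k`. -/
noncomputable def SstarP (F : Type*) [Field F] (n k : ℕ) :
    MonoidAlgebra F (FreeMonoid (Fin n)) :=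
  ∑ h : Fin k ↪ Fin n,
    MonoidAlgebra.single (FreeMonoid.ofList (List.ofFn fun i : Fin k => h i)) (1 : F)

/-- `f̂_S = Σ_{A ⊇ S, |A| = k/2} m*_A`. -/
noncomputable def fhatP (F : Type*) [Field F] (n k : ℕ) (S : Finset (Fin n)) :
    MonoidAlgebra F (FreeMonoid (Fin n)) :=
  ∑ A ∈ ((univ : Finset (Fin n)).powersetCard (k / 2)).filter (fun A => S ⊆ A),
    mstar F n (k / 2) A

section Aux

variable {n m : ℕ}

/-- left half of an embedding `Fin (m+m) ↪ Fin n` -/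
def embL (h : Fin (m + m) ↪ Fin n) : Fin m ↪ Fin n :=
  ⟨fun i => h (Fin.castAdd m i), by
    intro a b hab
    have := h.injective hab
    simpa [Fin.ext_iff] using this⟩

/-- right half -/
def embR (h : Fin (m + m) ↪ Fin n) : Fin m ↪ Fin n :=
  ⟨fun i => h (Fin.natAdd m i), by
    intro a b hab
    have := h.injective hab
    simpa [Fin.ext_iff] using this⟩

/-- glue two embeddings with distinct values -/
def glue (e₁ e₂ : Fin m ↪ Fin n) (hd : ∀ i j, e₁ i ≠ e₂ j) : Fin (m + m) ↪ Fin n :=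
  ⟨fun i => if h : (i : ℕ) < m then e₁ ⟨i, h⟩ else e₂ ⟨(i : ℕ) - m, by omega⟩, by
    intro a b hab
    simp only at hab
    split_ifs at hab with h1 h2 h2
    · have := e₁.injective hab
      simp [Fin.ext_iff] at this ⊢; omega
    · exact absurd hab (hd _ _)
    · exact absurd hab.symm (hd _ _)
    · have := e₂.injective hab
      have ha := a.isLt; have hb := b.isLt
      simp [Fin.ext_iff] at this ⊢; omega⟩

lemma glue_castAdd (e₁ e₂ : Fin m ↪ Fin n) (hd : ∀ i j, e₁ i ≠ e₂ j) (i : Fin m) :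
    glue e₁ e₂ hd (Fin.castAdd m i) = e₁ i := by
  show dite _ _ _ = _
  rw [dif_pos (by simp)]
  rfl

lemma glue_natAdd (e₁ e₂ : Fin m ↪ Fin n) (hd : ∀ i j, e₁ i ≠ e₂ j) (i : Fin m) :
    glue e₁ e₂ hd (Fin.natAdd m i) = e₂ i := by
  have : ¬ ((Fin.natAdd m i : Fin (m + m)) : ℕ) < m := by simp
  show dite _ _ _ = _
  rw [dif_neg this]
  congr 1
  simp [Fin.ext_iff]

lemma pairs_ne {p : (Fin m ↪ Fin n) × (Fin m ↪ Fin n)}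
    (hp : (univ.image fun i : Fin m => p.1 i) ∩ (univ.image fun i : Fin m => p.2 i) = ∅) :
    ∀ i j, p.1 i ≠ p.2 j := by
  intro i j hij
  have : p.1 i ∈ (univ.image fun i : Fin m => p.1 i) ∩ (univ.image fun i : Fin m => p.2 i) := by
    rw [mem_inter]
    exact ⟨mem_image_of_mem _ (mem_univ i), hij ▸ mem_image_of_mem _ (mem_univ j)⟩
  rw [hp] at this
  exact absurd this (notMem_empty _)

lemma SstarP_double (F : Type*) [Field F] (n m : ℕ) :
    SstarP F n (m + m) =
      ∑ p ∈ (univ : Finset ((Fin m ↪ Fin n) × (Fin m ↪ Fin n))).filter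
          (fun p => (univ.image fun i : Fin m => p.1 i) ∩ (univ.image fun i : Fin m => p.2 i) = ∅),
        MonoidAlgebra.single ((FreeMonoid.ofList (List.ofFn fun i : Fin m => p.1 i)) *
          (FreeMonoid.ofList (List.ofFn fun i : Fin m => p.2 i))) (1 : F) := by
  rw [SstarP]
  refine Finset.sum_bij' (fun h _ => (embL h, embR h))
    (fun p hp => glue p.1 p.2 (pairs_ne (mem_filter.mp hp).2)) ?_ ?_ ?_ ?_ ?_
  · -- forward lands in filter
    intro h _
    rw [mem_filter]
    refine ⟨mem_univ _, ?_⟩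
    rw [eq_empty_iff_forall_notMem]
    intro x hx
    rw [mem_inter, mem_image, mem_image] at hx
    obtain ⟨⟨i, _, hi⟩, ⟨j, _, hj⟩⟩ := hx
    have : h (Fin.castAdd m i) = h (Fin.natAdd m j) := by
      rw [show h (Fin.castAdd m i) = embL h i from rfl, show h (Fin.natAdd m j) = embR h j from rfl,
        hi, hj]
    have := h.injective this
    simp [Fin.ext_iff] at this
    omega
  · intro p hp; exact mem_univ _
  · -- left inverse
    intro h _
    apply Function.Embedding.ext
    intro a
    show (if h1 : (a : ℕ) < m then _ else _) = h a
    split_ifs with h1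
    · exact congrArg h (Fin.ext (by simp))
    · exact congrArg h (Fin.ext (by have := a.isLt; simp; omega))
  · -- right inverse
    intro p hp
    refine Prod.ext ?_ ?_
    · apply Function.Embedding.ext; intro a
      exact glue_castAdd _ _ (pairs_ne (mem_filter.mp hp).2) a
    · apply Function.Embedding.ext; intro a
      exact glue_natAdd _ _ (pairs_ne (mem_filter.mp hp).2) a
  · -- values
    intro h _
    congr 1
    rw [← FreeMonoid.ofList_append]
    congr 1
    rw [List.ofFn_add]
    rfl

end Aux

lemma sum_neg_one_pow (F : Type*) [Field F] {α : Type*} [DecidableEq α] (T : Finset α) :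
    (∑ S ∈ T.powerset, (-1 : F) ^ S.card) = if T = ∅ then 1 else 0 := by
  have h := Finset.sum_powerset_neg_one_pow_card (x := T)
  have : (∑ S ∈ T.powerset, (-1 : F) ^ S.card) = ((∑ S ∈ T.powerset, (-1 : ℤ) ^ S.card : ℤ) : F) := by
    push_cast; rfl
  rw [this, h]
  split_ifs <;> simp

lemma mstar_mul (F : Type*) [Field F] (n m : ℕ) (A B : Finset (Fin n)) :
    mstar F n m A * mstar F n m B =
      ∑ e₁ ∈ (univ : Finset (Fin m ↪ Fin n)).filter
          (fun e => univ.image (fun i : Fin m => e i) = A),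
        ∑ e₂ ∈ (univ : Finset (Fin m ↪ Fin n)).filter
            (fun e => univ.image (fun i : Fin m => e i) = B),
          MonoidAlgebra.single ((FreeMonoid.ofList (List.ofFn fun i : Fin m => e₁ i)) *
            (FreeMonoid.ofList (List.ofFn fun i : Fin m => e₂ i))) (1 : F) := by
  rw [mstar, mstar, Finset.sum_mul_sum]
  refine sum_congr rfl fun e₁ _ => sum_congr rfl fun e₂ _ => ?_
  rw [MonoidAlgebra.single_mul_single, one_mul]

lemma main_aux (F : Type*) [Field F] (n r : ℕ) :
    SstarP F n (r + r) =
      ∑ S ∈ (univ : Finset (Fin n)).powerset.filter (fun S => S.card ≤ r),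
        ((-1 : F) ^ S.card) •
          ((∑ A ∈ ((univ : Finset (Fin n)).powersetCard r).filter (fun A => S ⊆ A), mstar F n r A) *
           (∑ B ∈ ((univ : Finset (Fin n)).powersetCard r).filter (fun B => S ⊆ B), mstar F n r B)) := by
  rw [SstarP_double]
  symm
  have hz : ∀ S ∈ (univ : Finset (Fin n)).powerset,
      S ∉ (univ : Finset (Fin n)).powerset.filter (fun S => S.card ≤ r) →
      ((-1 : F) ^ S.card) •
          ((∑ A ∈ ((univ : Finset (Fin n)).powersetCard r).filter (fun A => S ⊆ A), mstar F n r A) *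
           (∑ B ∈ ((univ : Finset (Fin n)).powersetCard r).filter (fun B => S ⊆ B), mstar F n r B)) = 0 := by
    intro S hS hS'
    have hc : ¬ S.card ≤ r := by
      intro h; exact hS' (mem_filter.mpr ⟨hS, h⟩)
    have he : ((univ : Finset (Fin n)).powersetCard r).filter (fun A => S ⊆ A) = ∅ := by
      rw [filter_eq_empty_iff]
      intro A hA hSA
      exact hc (le_trans (card_le_card hSA) (le_of_eq (mem_powersetCard_univ.mp hA)))
    simp [he]
  rw [Finset.sum_subset (filter_subset _ _) hz]
  have step1 : ∀ S ∈ (univ : Finset (Fin n)).powerset,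
      ((-1 : F) ^ S.card) •
          ((∑ A ∈ ((univ : Finset (Fin n)).powersetCard r).filter (fun A => S ⊆ A), mstar F n r A) *
           (∑ B ∈ ((univ : Finset (Fin n)).powersetCard r).filter (fun B => S ⊆ B), mstar F n r B)) =
      ∑ A ∈ (univ : Finset (Fin n)).powersetCard r, ∑ B ∈ (univ : Finset (Fin n)).powersetCard r,
        if S ⊆ A ∩ B then ((-1 : F) ^ S.card) • (mstar F n r A * mstar F n r B) else 0 := by
    intro S _
    rw [Finset.sum_mul_sum, smul_sum, sum_filter]
    refine sum_congr rfl fun A _ => ?_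
    by_cases hA : S ⊆ A
    · rw [if_pos hA, smul_sum, sum_filter]
      refine sum_congr rfl fun B _ => ?_
      by_cases hB : S ⊆ B
      · rw [if_pos hB, if_pos (subset_inter hA hB)]
      · rw [if_neg hB, if_neg (fun h => hB (h.trans inter_subset_right))]
    · rw [if_neg hA]
      symm
      refine sum_eq_zero fun B _ => ?_
      rw [if_neg (fun h => hA (h.trans inter_subset_left))]
  rw [sum_congr rfl step1, Finset.sum_comm]
  refine Eq.trans (sum_congr rfl fun A _ => Finset.sum_comm) ?_
  have step2 : ∀ A B : Finset (Fin n),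
      (∑ S ∈ (univ : Finset (Fin n)).powerset,
        if S ⊆ A ∩ B then ((-1 : F) ^ S.card) • (mstar F n r A * mstar F n r B) else 0) =
      if A ∩ B = ∅ then mstar F n r A * mstar F n r B else 0 := by
    intro A B
    rw [← sum_filter]
    have hfil : (univ : Finset (Fin n)).powerset.filter (fun S => S ⊆ A ∩ B) = (A ∩ B).powerset := by
      ext S
      simp only [mem_filter, mem_powerset]
      exact and_iff_right (subset_univ S)
    rw [hfil, ← sum_smul, sum_neg_one_pow]
    split_ifs <;> simp
  refine Eq.trans (sum_congr rfl fun A _ => sum_congr rfl fun B _ => step2 A B) ?_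
  have step3 : ∀ A B : Finset (Fin n),
      (if A ∩ B = ∅ then mstar F n r A * mstar F n r B else 0) =
      ∑ e₁ ∈ (univ : Finset (Fin r ↪ Fin n)).filter
          (fun e => univ.image (fun i : Fin r => e i) = A),
        ∑ e₂ ∈ (univ : Finset (Fin r ↪ Fin n)).filter
            (fun e => univ.image (fun i : Fin r => e i) = B),
          if (univ.image fun i : Fin r => e₁ i) ∩ (univ.image fun i : Fin r => e₂ i) = ∅
          then MonoidAlgebra.single ((FreeMonoid.ofList (List.ofFn fun i : Fin r => e₁ i)) *
            (FreeMonoid.ofList (List.ofFn fun i : Fin r => e₂ i))) (1 : F) else 0 := by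
    intro A B
    split_ifs with hAB
    · rw [mstar_mul]
      refine sum_congr rfl fun e₁ he₁ => sum_congr rfl fun e₂ he₂ => ?_
      rw [if_pos (by rw [(mem_filter.mp he₁).2, (mem_filter.mp he₂).2]; exact hAB)]
    · symm
      refine sum_eq_zero fun e₁ he₁ => sum_eq_zero fun e₂ he₂ => ?_
      rw [if_neg (by rw [(mem_filter.mp he₁).2, (mem_filter.mp he₂).2]; exact hAB)]
  refine Eq.trans (sum_congr rfl fun A _ => sum_congr rfl fun B _ => step3 A B) ?_
  have hmaps : ∀ e ∈ (univ : Finset (Fin r ↪ Fin n)),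
      (univ.image fun i : Fin r => e i) ∈ (univ : Finset (Fin n)).powersetCard r := by
    intro e _
    rw [mem_powersetCard_univ, card_image_of_injective _ e.injective, card_univ, Fintype.card_fin]
  refine Eq.trans (sum_congr rfl fun A _ => Finset.sum_comm) ?_
  rw [Finset.sum_fiberwise_of_maps_to hmaps]
  refine Eq.trans (sum_congr rfl fun e₁ _ => Finset.sum_fiberwise_of_maps_to hmaps _) ?_
  rw [sum_filter, ← Finset.sum_product', Finset.univ_product_univ]

/-- For `k` even, `S*_{n,k} = Σ_{|S| ≤ k/2} (-1)^{|S|} f̂_S · f̂_S` in the free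
noncommutative algebra. -/
theorem Sstar_eq_inclusion_exclusion (F : Type*) [Field F] (n k : ℕ)
    (hk : Even k) (hkn : k / 2 ≤ n) :
    SstarP F n k =
      ∑ S ∈ (univ : Finset (Fin n)).powerset.filter (fun S => S.card ≤ k / 2),
        ((-1 : F) ^ S.card) • (fhatP F n k S * fhatP F n k S) := by
  obtain ⟨r, hr⟩ := hk
  subst hr
  have h2 : (r + r) / 2 = r := by omega
  simp only [fhatP, h2]
  exact main_aux F n r
end
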